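/- For a real number λ > 0 and integers 1 ≤ k ≤ l, one has ∑_{i=1}^{k} ( i! · C(l,i) ) / ( (λ)_{2i-1} · (λ+2i)_{l-i} ) = l/(λ)_l − (l−k)_{k+1}/(λ)_{l+k}, where (x)_p is the Pochhammer symbol. -/

import Mathlib

open Finset

/-- Pochhammer (rising factorial) symbol `(x)_p = x (x+1) ⋯ (x+p-1)`. -/
noncomputable def poch (x : ℝ) (p : ℕ) : ℝ := ∏ i ∈ Finset.range p, (x + i)

lemma poch_zero (x : ℝ) : poch x 0 = 1 := by simp [poch]

lemma poch_succ (x : ℝ) (p : ℕ) : poch x (p + 1) = poch x p * (x + p) := by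
  simp [poch, Finset.prod_range_succ]

lemma poch_succ' (x : ℝ) (p : ℕ) : poch x (p + 1) = x * poch (x + 1) p := by
  unfold poch
  rw [Finset.prod_range_succ']
  have h : ∀ i ∈ Finset.range p, x + (((i + 1 : ℕ) : ℝ)) = (x + 1) + (i : ℝ) :=
    fun i _ => by push_cast; ring
  rw [Finset.prod_congr rfl h]
  simp [mul_comm]

lemma poch_add (x : ℝ) (p q : ℕ) : poch x (p + q) = poch x p * poch (x + p) q := by
  induction q with
  | zero => simp [poch_zero]
  | succ q ih =>
    rw [← Nat.add_assoc, poch_succ, ih, poch_succ]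
    push_cast
    ring

lemma poch_pos {x : ℝ} (hx : 0 < x) (p : ℕ) : 0 < poch x p := by
  apply Finset.prod_pos
  intro i _
  positivity

lemma cast_descFactorial (l i : ℕ) (h : i ≤ l) :
    (Nat.descFactorial l i : ℝ) = poch ((l : ℝ) - i + 1) i := by
  induction i with
  | zero => simp [poch_zero]
  | succ i ih =>
    rw [Nat.descFactorial_succ, poch_succ']
    have hi : i ≤ l := Nat.le_of_succ_le h
    rw [Nat.cast_mul, ih hi, Nat.cast_sub hi]
    push_cast
    ring_nf

/-- The telescoping partial fraction sum, valid for all `k ≤ l`. -/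
lemma key (lam : ℝ) (hlam : 0 < lam) (l : ℕ) :
    ∀ k : ℕ, k ≤ l →
    ∑ i ∈ Finset.Icc 1 k,
        ((Nat.factorial i : ℝ) * (l.choose i : ℝ)) /
          (poch lam (2 * i - 1) * poch (lam + 2 * i) (l - i)) =
      poch ((l : ℝ) - 0) (0 + 1) / poch lam (l + 0) -
        poch ((l : ℝ) - k) (k + 1) / poch lam (l + k) := by
  intro k
  induction k with
  | zero => simp
  | succ j ih =>
    intro hjl
    have hj : j ≤ l := Nat.le_of_succ_le hjl
    have hnum : ((Nat.factorial (j+1) : ℝ) * (l.choose (j+1) : ℝ))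
        = poch ((l : ℝ) - j) (j + 1) := by
      rw [← Nat.cast_mul, ← Nat.descFactorial_eq_factorial_mul_choose,
        cast_descFactorial l (j+1) hjl]
      push_cast
      ring_nf
    have h2j : 2 * (j + 1) - 1 = 2 * j + 1 := by omega
    have h1 : poch lam (l + (j + 1)) =
        poch lam (2 * j + 1) * poch (lam + ((2 * j + 1 : ℕ) : ℝ)) (l - j) := by
      rw [show l + (j + 1) = (2 * j + 1) + (l - j) from by omega]
      exact poch_add _ _ _
    have h2 : poch (lam + ((2 * j + 1 : ℕ) : ℝ)) (l - j) =
        (lam + ((2 * j + 1 : ℕ) : ℝ)) *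
          poch (lam + ((2 * j + 1 : ℕ) : ℝ) + 1) (l - (j + 1)) := by
      rw [show l - j = (l - (j + 1)) + 1 from by omega]
      exact poch_succ' _ _
    have hsplit : poch lam (l + (j + 1)) =
        poch lam (2 * j + 1) * (lam + (2 * (j : ℝ) + 1)) *
          poch (lam + 2 * ((j : ℝ) + 1)) (l - (j + 1)) := by
      rw [h1, h2,
        show lam + ((2 * j + 1 : ℕ) : ℝ) + 1 = lam + 2 * ((j : ℝ) + 1) from by
          push_cast; ring]
      push_cast
      ring
    have hstep : poch lam (l + (j + 1)) = poch lam (l + j) * (lam + ((l : ℝ) + j)) := by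
      rw [show l + (j + 1) = (l + j) + 1 from by omega, poch_succ]
      push_cast
      ring
    have hfront : poch ((l : ℝ) - ((j : ℝ) + 1)) ((j + 1) + 1)
        = ((l : ℝ) - ((j : ℝ) + 1)) * poch ((l : ℝ) - j) (j + 1) := by
      rw [poch_succ',
        show (l : ℝ) - ((j : ℝ) + 1) + 1 = (l : ℝ) - j from by ring]
    have hp1 : (0:ℝ) < poch lam (2 * j + 1) := poch_pos hlam _
    have hp2 : (0:ℝ) < poch (lam + 2 * ((j : ℝ) + 1)) (l - (j + 1)) := by
      apply poch_pos; positivity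
    have hp3 : (0:ℝ) < poch lam (l + j) := poch_pos hlam _
    have hp4 : (0:ℝ) < poch lam (l + (j + 1)) := poch_pos hlam _
    have hterm : poch ((l : ℝ) - j) (j + 1) /
          (poch lam (2 * j + 1) * poch (lam + 2 * ((j : ℝ) + 1)) (l - (j + 1))) =
        poch ((l : ℝ) - j) (j + 1) / poch lam (l + j) -
          ((l : ℝ) - ((j : ℝ) + 1)) * poch ((l : ℝ) - j) (j + 1) /
            poch lam (l + (j + 1)) := by
      rw [div_sub_div _ _ (ne_of_gt hp3) (ne_of_gt hp4),
        div_eq_div_iff (by positivity) (by positivity)]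
      linear_combination
        (poch ((l : ℝ) - j) (j + 1) * poch lam (l + j)) * hsplit -
        (poch ((l : ℝ) - j) (j + 1) * poch lam (2 * j + 1) *
          poch (lam + 2 * ((j : ℝ) + 1)) (l - (j + 1))) * hstep
    rw [Finset.sum_Icc_succ_top (by omega : 1 ≤ j + 1), ih hj, hnum, h2j]
    push_cast
    rw [hfront, hterm]
    ring

theorem stmt2 (lam : ℝ) (hlam : 0 < lam) (k l : ℕ) (hk : 1 ≤ k) (hkl : k ≤ l) :
    ∑ i ∈ Finset.Icc 1 k,
        ((Nat.factorial i : ℝ) * (l.choose i : ℝ)) /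
          (poch lam (2 * i - 1) * poch (lam + 2 * i) (l - i)) =
      (l : ℝ) / poch lam l - poch ((l : ℝ) - (k : ℝ)) (k + 1) / poch lam (l + k) := by
  have := key lam hlam l k hkl
  rw [this]
  simp [poch, Finset.prod_range_one]
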